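/- Let G be an additive subgroup of ℂ that contains a lattice. Then the topological closure of G is one of the following: (i) a lattice in ℂ (this happens exactly when G is discrete); (ii) a subgroup of the form ℓ + ℤw for some one-dimensional ℝ-linear subspace ℓ of ℂ and some w ∈ ℂ with w ∉ ℓ; or (iii) all of ℂ. -/
import Mathlib

open Module Submodule Filter

/-- A lattice in `ℂ`: an additive subgroup of the form `ℤa + ℤb` with `a, b`
linearly independent over `ℝ`. -/
def IsLatticeC (Λ : AddSubgroup ℂ) : Prop :=
  ∃ a b : ℂ, LinearIndependent ℝ ![a, b] ∧ Λ = AddSubgroup.closure {a, b}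

lemma lattice_discrete {Λ : AddSubgroup ℂ} (h : IsLatticeC Λ) : DiscreteTopology ↥Λ := by
  obtain ⟨a, b, hli, rfl⟩ := h
  let hb : Basis (Fin 2) ℝ ℂ :=
    basisOfLinearIndependentOfCardEqFinrank hli (by simp [Complex.finrank_real_complex])
  have hrange : Set.range ⇑hb = {a, b} := by
    rw [show ⇑hb = ![a,b] from coe_basisOfLinearIndependentOfCardEqFinrank _ _]
    simp [Matrix.range_cons, Matrix.range_empty, Set.pair_comm]
  have hinst : DiscreteTopology (span ℤ (Set.range ⇑hb)) := inferInstance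
  have hsets : (AddSubgroup.closure ({a,b} : Set ℂ) : Set ℂ) = ↑(span ℤ (Set.range ⇑hb)) := by
    rw [hrange, ← Submodule.span_int_eq_addSubgroupClosure]; rfl
  exact DiscreteTopology.of_subset hinst (le_of_eq hsets)

lemma discrete_isLattice (H : AddSubgroup ℂ) [hd : DiscreteTopology ↥H]
    {a b : ℂ} (hli : LinearIndependent ℝ ![a,b]) (ha : a ∈ H) (hb : b ∈ H) :
    IsLatticeC H := by
  let L : Submodule ℤ ℂ := AddSubgroup.toIntSubmodule H
  have hdL : DiscreteTopology L := hd
  have hspan : span ℝ (L : Set ℂ) = ⊤ := by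
    rw [eq_top_iff]
    have h1 : span ℝ ({a,b} : Set ℂ) = ⊤ := by
      have := hli.span_eq_top_of_card_eq_finrank (by simp [Complex.finrank_real_complex])
      rwa [show Set.range ![a,b] = {a,b} by
        simp [Matrix.range_cons, Matrix.range_empty, Set.pair_comm]] at this
    rw [← h1]
    exact span_mono (by rintro x (rfl|rfl) <;> assumption)
  have hZL : IsZLattice ℝ L := ⟨hspan⟩
  have hfree : Module.Free ℤ L := ZLattice.module_free ℝ L
  have hfin : Module.Finite ℤ L := ZLattice.module_finite ℝ L
  have hrank : finrank ℤ L = 2 := by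
    rw [ZLattice.rank ℝ L, Complex.finrank_real_complex]
  let B0 := Module.finBasis ℤ L
  let B : Basis (Fin 2) ℤ L := B0.reindex (finCongr hrank)
  let C : Basis (Fin 2) ℝ ℂ := B.ofZLatticeBasis ℝ L
  refine ⟨C 0, C 1, ?_, ?_⟩
  · have : ![C 0, C 1] = ⇑C := by
      funext i; fin_cases i <;> rfl
    rw [this]; exact C.linearIndependent
  · have hspan2 : span ℤ (Set.range ⇑C) = L := B.ofZLatticeBasis_span ℝ
    have hrange : Set.range ⇑C = {C 0, C 1} := by
      rw [show ⇑C = ![C 0, C 1] by funext i; fin_cases i <;> rfl]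
      simp [Matrix.range_cons, Matrix.range_empty, Set.pair_comm]
    calc H = L.toAddSubgroup := (AddSubgroup.toIntSubmodule_toAddSubgroup H).symm
    _ = (span ℤ ({C 0, C 1} : Set ℂ)).toAddSubgroup := by rw [← hrange, hspan2]
    _ = AddSubgroup.closure {C 0, C 1} := Submodule.span_int_eq_addSubgroupClosure _

lemma gap_discrete {H : AddSubgroup ℂ} {ε : ℝ} (hε : 0 < ε)
    (hgap : ∀ x ∈ H, ‖x‖ < ε → x = 0) : DiscreteTopology ↥H := by
  rw [discreteTopology_iff_isOpen_singleton_zero, isOpen_induced_iff]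
  refine ⟨Metric.ball 0 ε, Metric.isOpen_ball, ?_⟩
  ext x
  simp only [Set.mem_preimage, Metric.mem_ball, dist_zero_right, Set.mem_singleton_iff]
  constructor
  · intro hx
    exact Subtype.ext (hgap x.1 x.2 hx)
  · rintro rfl
    simpa using hε

lemma exists_line {H : AddSubgroup ℂ} (hcl : IsClosed (H : Set ℂ))
    (h : ∀ ε : ℝ, ε > 0 → ∃ x ∈ H, x ≠ 0 ∧ ‖x‖ < ε) :
    ∃ u : ℂ, u ≠ 0 ∧ ∀ t : ℝ, t • u ∈ H := by
  have h' : ∀ n : ℕ, ∃ x : ℂ, x ∈ H ∧ x ≠ 0 ∧ ‖x‖ < 1/(n+1) := by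
    intro n
    obtain ⟨x, hx1, hx2, hx3⟩ := h (1/(n+1)) (by positivity)
    exact ⟨x, hx1, hx2, hx3⟩
  choose x hxH hx0 hxn using h'
  have hnorm : ∀ n, ‖x n‖ ≠ 0 := fun n => norm_ne_zero_iff.mpr (hx0 n)
  set uu : ℕ → ℂ := fun n => (‖x n‖)⁻¹ • x n with huu
  have huus : ∀ n, uu n ∈ Metric.sphere (0:ℂ) 1 := by
    intro n
    simp only [mem_sphere_iff_norm, sub_zero, huu, norm_smul, norm_inv, norm_norm]
    rw [inv_mul_cancel₀ (hnorm n)]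
  obtain ⟨u, humem, φ, hφ, hconv⟩ :=
    (isCompact_sphere (0:ℂ) 1).tendsto_subseq huus
  have hu0 : u ≠ 0 := by
    intro h0
    rw [h0, mem_sphere_iff_norm, sub_zero, norm_zero] at humem
    norm_num at humem
  refine ⟨u, hu0, fun t => ?_⟩
  set r : ℕ → ℝ := fun n => ‖x (φ n)‖ with hr
  have hr0 : ∀ n, 0 < r n := fun n => norm_pos_iff.mpr (hx0 (φ n))
  have hrlim : Tendsto r atTop (nhds 0) := by
    apply squeeze_zero (fun n => norm_nonneg _) (fun n => ?_)
      tendsto_one_div_add_atTop_nhds_zero_nat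
    have h1 : r n < 1/((φ n : ℝ)+1) := hxn (φ n)
    have h2 : 1/((φ n : ℝ)+1) ≤ 1/((n:ℝ)+1) := by
      apply one_div_le_one_div_of_le (by positivity)
      have h0 : n ≤ φ n := hφ.le_apply
      have := (Nat.cast_le (α := ℝ)).mpr h0
      linarith
    linarith
  set c : ℕ → ℤ := fun n => ⌊t / r n⌋ with hc
  have hclim : Tendsto (fun n => (c n : ℝ) * r n) atTop (nhds t) := by
    apply tendsto_of_tendsto_of_tendsto_of_le_of_le
      (g := fun n => t - r n) (h := fun _ => t)
      (by simpa using tendsto_const_nhds.sub hrlim) tendsto_const_nhds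
    · intro n
      show t - r n ≤ (c n : ℝ) * r n
      have h2 : t / r n < (c n : ℝ) + 1 := Int.lt_floor_add_one _
      have h3 := (div_lt_iff₀ (hr0 n)).mp h2
      nlinarith [hr0 n]
    · intro n
      show (c n : ℝ) * r n ≤ t
      have h1 : (c n : ℝ) ≤ t / r n := Int.floor_le _
      exact (le_div_iff₀ (hr0 n)).mp h1
  have htend : Tendsto (fun n => ((c n : ℝ) * r n) • uu (φ n)) atTop (nhds (t • u)) :=
    hclim.smul hconv
  exact hcl.mem_of_tendsto htend (Filter.Eventually.of_forall (fun n => by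
    have heq : ((c n : ℝ) * r n) • uu (φ n) = c n • x (φ n) := by
      simp only [huu, hr, smul_smul]
      rw [mul_assoc, mul_inv_cancel₀ (hnorm (φ n)), mul_one, Int.cast_smul_eq_zsmul]
    rw [heq]
    exact H.zsmul_mem (hxH (φ n)) _))

lemma line_case {H : AddSubgroup ℂ} (hcl : IsClosed (H : Set ℂ)) {u a b : ℂ} (hu : u ≠ 0)
    (hline : ∀ t : ℝ, t • u ∈ H) (ha : a ∈ H) (hb : b ∈ H)
    (hli : LinearIndependent ℝ ![a,b]) :
    (∃ (ℓ : Submodule ℝ ℂ) (w : ℂ), finrank ℝ ℓ = 1 ∧ w ∉ ℓ ∧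
        H = ℓ.toAddSubgroup ⊔ AddSubgroup.closure {w}) ∨ H = ⊤ := by
  set ℓ : Submodule ℝ ℂ := span ℝ {u} with hℓ
  have hℓrank : finrank ℝ ℓ = 1 := finrank_span_singleton hu
  set f : ℂ → ℝ := fun z => (z / u).im with hf
  have hmemℓ : ∀ z : ℂ, z ∈ ℓ ↔ f z = 0 := by
    intro z
    rw [hℓ, mem_span_singleton]
    constructor
    · rintro ⟨t, rfl⟩
      show ((t • u) / u).im = 0
      rw [Complex.real_smul, mul_div_assoc, div_self hu, mul_one, Complex.ofReal_im]
    · intro h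
      refine ⟨(z/u).re, ?_⟩
      rw [Complex.real_smul]
      have : ((z/u).re : ℂ) = z / u := Complex.ext (by simp) (by simpa using h.symm)
      rw [this, div_mul_cancel₀ _ hu]
  have hℓH : ∀ z ∈ ℓ, z ∈ H := by
    intro z hz
    rw [hℓ, mem_span_singleton] at hz
    obtain ⟨t, rfl⟩ := hz
    exact hline t
  have hfsub : ∀ z w : ℂ, f (z - w) = f z - f w := by
    intro z w; simp only [hf, sub_div, Complex.sub_im]
  have hfsmul : ∀ (t : ℝ) (z : ℂ), f (t • z) = t * f z := by
    intro t z
    simp [hf, Complex.real_smul, mul_div_assoc, Complex.mul_im]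
  set v : ℂ := u * Complex.I with hv
  have hfv : f v = 1 := by
    simp only [hf, hv]
    rw [mul_div_cancel_left₀ _ hu, Complex.I_im]
  set S : AddSubgroup ℝ :=
    { carrier := {s : ℝ | s • v ∈ H},
      zero_mem' := by simp only [Set.mem_setOf_eq, zero_smul]; exact H.zero_mem,
      add_mem' := fun {s t} hs ht => by
        simp only [Set.mem_setOf_eq, add_smul] at *; exact H.add_mem hs ht,
      neg_mem' := fun {s} hs => by
        simp only [Set.mem_setOf_eq, neg_smul] at *; exact H.neg_mem hs } with hS
  have hSmem : ∀ s : ℝ, s ∈ S ↔ s • v ∈ H := fun s => Iff.rfl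
  have hkey : ∀ z ∈ H, f z ∈ S := by
    intro z hz
    have h1 : z - f z • v ∈ ℓ := by
      rw [hmemℓ, hfsub, hfsmul, hfv, mul_one, sub_self]
    rw [hSmem]
    have := H.sub_mem hz (hℓH _ h1)
    simpa using this
  have hSclosed : IsClosed (S : Set ℝ) := by
    have : (S : Set ℝ) = (fun s : ℝ => s • v) ⁻¹' (H : Set ℂ) := rfl
    rw [this]
    exact hcl.preimage (continuous_id.smul continuous_const)
  rcases S.dense_or_cyclic with hdense | ⟨α, hα⟩
  · right
    have hSuniv : (S : Set ℝ) = Set.univ := by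
      rw [← hSclosed.closure_eq]; exact hdense.closure_eq
    rw [eq_top_iff]
    intro z _
    have h1 : z - f z • v ∈ ℓ := by
      rw [hmemℓ, hfsub, hfsmul, hfv, mul_one, sub_self]
    have h2 : f z • v ∈ H := by
      have : f z ∈ S := by rw [← SetLike.mem_coe, hSuniv]; trivial
      exact (hSmem _).mp this
    have := H.add_mem (hℓH _ h1) h2
    simpa using this
  · by_cases hα0 : α = 0
    · exfalso
      have hHℓ : ∀ z ∈ H, z ∈ ℓ := by
        intro z hz
        have := hkey z hz
        rw [hα, hα0, AddSubgroup.closure_singleton_zero, AddSubgroup.mem_bot] at this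
        rw [hmemℓ]; exact this
      have hspan2 : span ℝ (Set.range ![a,b]) ≤ ℓ := by
        rw [show Set.range ![a,b] = {a,b} by
          simp [Matrix.range_cons, Matrix.range_empty, Set.pair_comm], span_le]
        intro z hz
        simp only [Set.mem_insert_iff, Set.mem_singleton_iff] at hz
        rcases hz with rfl | rfl
        · exact hHℓ _ ha
        · exact hHℓ _ hb
      have hfr : finrank ℝ (span ℝ (Set.range ![a,b])) = 2 := by
        rw [finrank_span_eq_card hli]; simp
      have := Submodule.finrank_mono hspan2
      rw [hfr, hℓrank] at this
      omega
    · left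
      refine ⟨ℓ, α • v, hℓrank, ?_, ?_⟩
      · rw [hmemℓ, hfsmul, hfv, mul_one]; exact hα0
      · apply le_antisymm
        · intro z hz
          have h1 : z - f z • v ∈ ℓ := by
            rw [hmemℓ, hfsub, hfsmul, hfv, mul_one, sub_self]
          have h2 := hkey z hz
          rw [hα, AddSubgroup.mem_closure_singleton] at h2
          obtain ⟨n, hn⟩ := h2
          have hzeq : z = (z - f z • v) + n • (α • v) := by
            rw [← smul_assoc, hn]; abel
          rw [hzeq]
          exact AddSubgroup.add_mem _
            (AddSubgroup.mem_sup_left ((Submodule.mem_toAddSubgroup ℓ).mpr h1))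
            (AddSubgroup.mem_sup_right (AddSubgroup.zsmul_mem _
              (AddSubgroup.subset_closure (Set.mem_singleton _)) n))
        · rw [sup_le_iff]
          constructor
          · intro z hz; exact hℓH z hz
          · rw [AddSubgroup.closure_le]
            rintro z rfl
            exact (hSmem α).mp (by
              rw [hα]; exact AddSubgroup.subset_closure (Set.mem_singleton _))

/-- If an additive subgroup `G` of `ℂ` contains a lattice, then its topological closure is
either (i) a lattice (which happens exactly when `G` is discrete), (ii) of the form `ℓ + ℤw`
for a line `ℓ` through `0` and `w ∉ ℓ`, or (iii) all of `ℂ`. -/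
theorem stmt4 (G : AddSubgroup ℂ) (hG : ∃ Λ : AddSubgroup ℂ, IsLatticeC Λ ∧ Λ ≤ G) :
    (IsLatticeC G.topologicalClosure ∨
      (∃ (ℓ : Submodule ℝ ℂ) (w : ℂ), Module.finrank ℝ ℓ = 1 ∧ w ∉ ℓ ∧
        G.topologicalClosure = ℓ.toAddSubgroup ⊔ AddSubgroup.closure {w}) ∨
      G.topologicalClosure = ⊤) ∧
    (IsLatticeC G.topologicalClosure ↔ DiscreteTopology ↥G) := by
  obtain ⟨Λ, ⟨a, b, hli, hΛ⟩, hΛG⟩ := hG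
  have ha : a ∈ G := hΛG (hΛ ▸ AddSubgroup.subset_closure (by simp))
  have hb : b ∈ G := hΛG (hΛ ▸ AddSubgroup.subset_closure (by simp))
  have hGH : G ≤ G.topologicalClosure := G.le_topologicalClosure
  have haH : a ∈ G.topologicalClosure := hGH ha
  have hbH : b ∈ G.topologicalClosure := hGH hb
  have hcl : IsClosed (G.topologicalClosure : Set ℂ) := G.isClosed_topologicalClosure
  by_cases hd : DiscreteTopology ↥G.topologicalClosure
  · have hlat : IsLatticeC G.topologicalClosure := discrete_isLattice _ hli haH hbH
    refine ⟨Or.inl hlat, ?_, fun _ => hlat⟩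
    intro _
    exact DiscreteTopology.of_subset hd (SetLike.coe_subset_coe.mpr hGH)
  · have hsmall : ∀ ε : ℝ, ε > 0 → ∃ x ∈ G.topologicalClosure, x ≠ 0 ∧ ‖x‖ < ε := by
      by_contra hcon
      push_neg at hcon
      obtain ⟨ε, hε, hgap⟩ := hcon
      exact hd (gap_discrete hε (fun x hx hlt => by
        by_contra h0; exact absurd hlt (not_lt.mpr (hgap x hx h0))))
    obtain ⟨u, hu0, hline⟩ := exists_line hcl hsmall
    constructor
    · rcases line_case hcl hu0 hline haH hbH hli with h | h
      · exact Or.inr (Or.inl h)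
      · exact Or.inr (Or.inr h)
    · constructor
      · intro hlat; exact absurd (lattice_discrete hlat) hd
      · intro hGd
        exfalso
        haveI := hGd
        have hGc : IsClosed (G : Set ℂ) := AddSubgroup.isClosed_of_discrete
        have hHG : G.topologicalClosure = G := SetLike.ext' hGc.closure_eq
        rw [hHG] at hd
        exact hd hGd
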